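/- arXiv:1509.03819 — 4 statements merged into one kernel-verified Lean document; each statement's English description precedes it below -/
import Mathlib

section
/- If α : V → 𝒫(V') is a maximal monotone operator on a real Banach space V, then its Fitzpatrick function satisfies f_α(v,v*) ≥ ⟨v*,v⟩ for all (v,v*) ∈ V × V', with equality if and only if v* ∈ α(v). -/
open NormedSpace

/-- The Fitzpatrick function of a multivalued operator `α : V → 𝒫(V')`. -/
noncomputable def fitzpatrick {V : Type*} [NormedAddCommGroup V] [NormedSpace ℝ V]
    (α : V → Set (StrongDual ℝ V)) : V × StrongDual ℝ V → EReal :=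
  fun p => ⨆ q : {q : V × StrongDual ℝ V // q.2 ∈ α q.1},
    ((p.2 q.1.1 + q.1.2 (p.1 - q.1.1) : ℝ) : EReal)

/-- Fitzpatrick's theorem: for a maximal monotone operator `α`, the Fitzpatrick
function dominates the duality pairing, with equality exactly on the graph of `α`. -/
theorem stmt1 {V : Type*} [NormedAddCommGroup V] [NormedSpace ℝ V]
    (α : V → Set (StrongDual ℝ V))
    (hproper : ∃ v w, w ∈ α v)
    (hmono : ∀ v w (v' w' : StrongDual ℝ V), v' ∈ α v → w' ∈ α w → 0 ≤ (v' - w') (v - w))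
    (hmax : ∀ v (v' : StrongDual ℝ V),
      (∀ w (w' : StrongDual ℝ V), w' ∈ α w → 0 ≤ (v' - w') (v - w)) → v' ∈ α v) :
    ∀ v (v' : StrongDual ℝ V),
      ((v' v : ℝ) : EReal) ≤ fitzpatrick α (v, v') ∧
        (fitzpatrick α (v, v') = ((v' v : ℝ) : EReal) ↔ v' ∈ α v) := by
  intro v v'
  have key : v' ∈ α v → fitzpatrick α (v, v') = ((v' v : ℝ) : EReal) := by
    intro h
    apply le_antisymm
    · apply iSup_le
      rintro ⟨⟨w, w'⟩, hw⟩
      rw [EReal.coe_le_coe_iff]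
      have := hmono v w v' w' h hw
      simp only [ContinuousLinearMap.sub_apply, map_sub] at this ⊢
      linarith
    · have hle := le_iSup (fun q : {q : V × StrongDual ℝ V // q.2 ∈ α q.1} =>
        ((v' q.1.1 + q.1.2 (v - q.1.1) : ℝ) : EReal)) ⟨(v, v'), h⟩
      simpa [fitzpatrick] using hle
  by_cases h : v' ∈ α v
  · exact ⟨(key h).ge, by simp [key h, h]⟩
  · obtain ⟨w, w', hw, hlt⟩ : ∃ w w', w' ∈ α w ∧ (v' - w') (v - w) < 0 := by
      by_contra hc
      push_neg at hc
      exact h (hmax v v' fun w w' hw => hc w w' hw)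
    have hterm : ((v' v : ℝ) : EReal) < ((v' w + w' (v - w) : ℝ) : EReal) := by
      rw [EReal.coe_lt_coe_iff]
      simp only [ContinuousLinearMap.sub_apply, map_sub] at hlt ⊢
      linarith
    have hle := le_iSup (fun q : {q : V × StrongDual ℝ V // q.2 ∈ α q.1} =>
        ((v' q.1.1 + q.1.2 (v - q.1.1) : ℝ) : EReal)) ⟨(w, w'), hw⟩
    have hlt2 : ((v' v : ℝ) : EReal) < fitzpatrick α (v, v') :=
      lt_of_lt_of_le hterm (by simpa [fitzpatrick] using hle)
    exact ⟨hlt2.le, ⟨fun he => absurd he hlt2.ne', fun hv => absurd hv h⟩⟩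
end

section
/- Let V, H be Hilbert spaces with V ⊂ H = H' ⊂ V' continuously and densely. For every v ∈ H¹(0,T;V') ∩ L²(0,T;V) and with μ the measure dμ(t) = (T-t)dt, one has ∫₀ᵀ ⟨D_t v, v⟩ dμ(t) = (1/2)∫₀ᵀ ‖v(t)‖²_H dt − (T/2)‖v(0)‖²_H. -/
open NormedSpace MeasureTheory intervalIntegral

/-- For `v ∈ H¹(0,T;V') ∩ L²(0,T;V)` in a Hilbert triplet `V ⊂ H = H' ⊂ V'`,
with the measure `dμ(t) = (T-t)dt`:
`∫₀ᵀ ⟨D_t v, v⟩ (T-t) dt = (1/2)∫₀ᵀ ‖v(t)‖²_H dt − (T/2)‖v(0)‖²_H`.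
Here `i : V → H` is the (dense, continuous) injection, and the embedding `H ⊂ V'` is
`h ↦ ⟪h, i ·⟫`, so that `(j ∘ i ∘ v)' = w` expresses `D_t v = w` in `V'`. -/
theorem stmt11 {V H : Type*} [NormedAddCommGroup V] [NormedSpace ℝ V]
    [NormedAddCommGroup H] [InnerProductSpace ℝ H]
    (i : V →L[ℝ] H) (hiinj : Function.Injective i) (hidense : DenseRange i)
    (T : ℝ) (hT : 0 < T)
    (v : ℝ → V) (w : ℝ → StrongDual ℝ V)
    (hv_cont : ContinuousOn v (Set.Icc 0 T))
    (hderiv : ∀ t ∈ Set.Icc 0 T,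
      HasDerivAt (fun s : ℝ => ((innerSL ℝ (i (v s))).comp i : StrongDual ℝ V)) (w t) t)
    (hint1 : IntervalIntegrable (fun t => (w t) (v t) * (T - t)) volume 0 T)
    (hint2 : IntervalIntegrable (fun t => ‖i (v t)‖ ^ 2) volume 0 T) :
    ∫ t in (0:ℝ)..T, (w t) (v t) * (T - t)
      = (1 / 2) * (∫ t in (0:ℝ)..T, ‖i (v t)‖ ^ 2) - (T / 2) * ‖i (v 0)‖ ^ 2 := by
  set A : ℝ → StrongDual ℝ V := fun s => ((innerSL ℝ (i (v s))).comp i : StrongDual ℝ V) with hA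
  set f : ℝ → ℝ := fun s => ‖i (v s)‖ ^ 2 with hf
  -- key derivative lemma : f' = 2 ⟨w, v⟩ within Icc
  have hfderiv : ∀ t ∈ Set.Icc (0:ℝ) T,
      HasDerivWithinAt f (2 * (w t) (v t)) (Set.Icc 0 T) t := by
    intro t ht
    have hAd : HasDerivWithinAt A (w t) (Set.Icc 0 T) t := (hderiv t ht).hasDerivWithinAt
    have hslopeA : Filter.Tendsto (slope A t) (nhdsWithin t (Set.Icc 0 T \ {t}))
        (nhds (w t)) := hasDerivWithinAt_iff_tendsto_slope.mp hAd
    have hvc : Filter.Tendsto (fun s => v s + v t) (nhdsWithin t (Set.Icc 0 T \ {t}))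
        (nhds (v t + v t)) := by
      have h1 : Filter.Tendsto v (nhdsWithin t (Set.Icc 0 T \ {t})) (nhds (v t)) :=
        ((hv_cont t ht).mono Set.diff_subset)
      exact h1.add tendsto_const_nhds
    have happ : Filter.Tendsto (fun s => (slope A t s) (v s + v t))
        (nhdsWithin t (Set.Icc 0 T \ {t})) (nhds ((w t) (v t + v t))) := by
      have hcont : Continuous (fun p : (StrongDual ℝ V) × V => p.1 p.2) :=
        isBoundedBilinearMap_apply.continuous
      exact (hcont.tendsto (w t, v t + v t)).comp (hslopeA.prodMk_nhds hvc)
    have heq : ∀ s ∈ Set.Icc (0:ℝ) T \ {t},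
        (slope A t s) (v s + v t) = slope f t s := by
      intro s hs
      have hst : s - t ≠ 0 := sub_ne_zero.mpr hs.2
      have key : (A s) (v s + v t) - (A t) (v s + v t) = f s - f t := by
        simp only [hA, ContinuousLinearMap.comp_apply, innerSL_apply_apply, map_add, hf]
        rw [real_inner_comm (i (v t)) (i (v s)), real_inner_self_eq_norm_sq,
          real_inner_self_eq_norm_sq]
        ring
      simp only [slope, vsub_eq_sub, ContinuousLinearMap.smul_apply,
        ContinuousLinearMap.sub_apply, key, smul_eq_mul]
    have htend : Filter.Tendsto (slope f t) (nhdsWithin t (Set.Icc 0 T \ {t}))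
        (nhds ((w t) (v t + v t))) := by
      refine happ.congr' ?_
      filter_upwards [self_mem_nhdsWithin] with s hs using heq s hs
    have : HasDerivWithinAt f ((w t) (v t + v t)) (Set.Icc 0 T) t :=
      hasDerivWithinAt_iff_tendsto_slope.mpr htend
    simpa [map_add, two_mul] using this
  -- the auxiliary function G and its derivative
  set G : ℝ → ℝ := fun s => (1 / 2) * f s * (T - s) with hG
  have hfc : ContinuousOn f (Set.Icc 0 T) := by
    exact ((i.continuous.comp_continuousOn hv_cont).norm.pow 2)
  have hGc : ContinuousOn G (Set.Icc 0 T) := by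
    exact (continuousOn_const.mul hfc).mul (continuousOn_const.sub continuousOn_id)
  have hGderiv : ∀ s ∈ Set.Ioo (0:ℝ) T,
      HasDerivWithinAt G ((w s) (v s) * (T - s) - (1 / 2) * f s) (Set.Ioi s) s := by
    intro s hs
    have hs' : s ∈ Set.Icc (0:ℝ) T := Set.mem_Icc_of_Ioo hs
    have hmem : Set.Icc (0:ℝ) T ∈ nhds s := Icc_mem_nhds hs.1 hs.2
    have hfd : HasDerivAt f (2 * (w s) (v s)) s := (hfderiv s hs').hasDerivAt hmem
    have h1 : HasDerivAt (fun u => (1 / 2 : ℝ) * f u) ((1 / 2) * (2 * (w s) (v s))) s :=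
      hfd.const_mul (1 / 2)
    have h2 : HasDerivAt (fun u : ℝ => T - u) (-1) s := by
      simpa using (hasDerivAt_id s).const_sub T
    have := h1.mul h2
    have h3 : HasDerivAt G ((w s) (v s) * (T - s) - (1 / 2) * f s) s := by
      refine this.congr_deriv ?_
      ring
    exact h3.hasDerivWithinAt
  have hintG : IntervalIntegrable (fun s => (w s) (v s) * (T - s) - (1 / 2) * f s)
      volume 0 T := hint1.sub (hint2.const_mul (1 / 2))
  have hFTC : ∫ s in (0:ℝ)..T, ((w s) (v s) * (T - s) - (1 / 2) * f s)
      = G T - G 0 :=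
    intervalIntegral.integral_eq_sub_of_hasDeriv_right_of_le hT.le hGc hGderiv hintG
  rw [intervalIntegral.integral_sub hint1 (hint2.const_mul (1 / 2))] at hFTC
  rw [intervalIntegral.integral_const_mul] at hFTC
  have hGT : G T = 0 := by simp [hG]
  have hG0 : G 0 = (T / 2) * ‖i (v 0)‖ ^ 2 := by simp [hG, hf]; ring
  rw [hGT, hG0] at hFTC
  linarith [hFTC]
end

section
/- If α : V → 𝒫(V') is maximal monotone and is represented by g ∈ 𝓕(V), then its pointwise a.e. superposition α̂ on L²(0,T;V) is maximal monotone; in particular g* ∈ 𝓕(V') represents α⁻¹, ∫₀ᵀ g*(·,·) dt represents the superposition of α⁻¹, and since the superposition of α⁻¹ equals (superposition of α)⁻¹, the operator α̂ is maximal monotone. -/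
open NormedSpace MeasureTheory Set Topology TopologicalSpace Metric

private lemma superposition_cover {V : Type*} [NormedAddCommGroup V] [NormedSpace ℝ V]
    (α : V → Set (StrongDual ℝ V)) (p₀ : V × StrongDual ℝ V) (hp₀ : p₀.2 ∈ α p₀.1)
    {K : Set (V × StrongDual ℝ V)} (hK : IsSeparable K) :
    ∃ p : ℕ → V × StrongDual ℝ V, (∀ n, (p n).2 ∈ α (p n).1) ∧
      ∀ z ∈ K, (∃ q : V × StrongDual ℝ V, q.2 ∈ α q.1 ∧ (z.2 - q.2) (z.1 - q.1) < 0) →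
        ∃ n, (z.2 - (p n).2) (z.1 - (p n).1) < 0 := by
  obtain ⟨D, hDc, hDsub⟩ := hK
  rcases D.eq_empty_or_nonempty with hD | hD
  · refine ⟨fun _ => p₀, fun _ => hp₀, fun z hz _ => absurd (hDsub hz) ?_⟩
    simp [hD]
  obtain ⟨d, hd⟩ := hDc.exists_eq_range hD
  set r : ℕ → ℝ := fun j => (((Nat.unpair j).1 : ℝ) + 1) / (((Nat.unpair j).2 : ℝ) + 1) with hr
  have hdense : ∀ a b : ℝ, 0 < a → a < b → ∃ j : ℕ, a < r j ∧ r j < b := by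
    intro a b ha hab
    obtain ⟨q, hq1, hq2⟩ := exists_rat_btwn hab
    have hqpos : 0 < q := by exact_mod_cast ha.trans hq1
    have hnum : 0 < q.num := Rat.num_pos.mpr hqpos
    refine ⟨Nat.pair (q.num.toNat - 1) (q.den - 1), ?_, ?_⟩ <;>
    · have h1 : ((q.num.toNat - 1 : ℕ) : ℝ) + 1 = (q.num : ℝ) := by
        rw [← Nat.cast_add_one, Nat.sub_add_cancel (by omega : 1 ≤ q.num.toNat)]
        exact_mod_cast Int.toNat_of_nonneg hnum.le
      have h2 : ((q.den - 1 : ℕ) : ℝ) + 1 = (q.den : ℝ) := by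
        rw [← Nat.cast_add_one, Nat.sub_add_cancel q.den_pos]
      have h3 : r (Nat.pair (q.num.toNat - 1) (q.den - 1)) = (q : ℝ) := by
        rw [hr]
        simp only [Nat.unpair_pair]
        rw [h1, h2, Rat.cast_def]
      rw [h3]
      assumption
  set Q : ℕ → ℕ → Prop := fun i j => ∃ q : V × StrongDual ℝ V, q.2 ∈ α q.1 ∧
      ∀ z ∈ Metric.ball (d i) (r j), (z.2 - q.2) (z.1 - q.1) < 0 with hQ
  classical
  set p' : ℕ → ℕ → V × StrongDual ℝ V := fun i j => if h : Q i j then h.choose else p₀ with hp'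
  refine ⟨fun n => p' (Nat.unpair n).1 (Nat.unpair n).2, ?_, ?_⟩
  · intro n
    by_cases h : Q (Nat.unpair n).1 (Nat.unpair n).2
    · simp only [hp', dif_pos h]; exact h.choose_spec.1
    · simp only [hp', dif_neg h]; exact hp₀
  · rintro z hz ⟨q, hq, hqz⟩
    have hc : Continuous fun y : V × StrongDual ℝ V => (y.2 - q.2) (y.1 - q.1) :=
      isBoundedBilinearMap_apply.continuous.comp
        ((continuous_snd.sub continuous_const).prodMk (continuous_fst.sub continuous_const))
    have hO : IsOpen {y : V × StrongDual ℝ V | (y.2 - q.2) (y.1 - q.1) < 0} :=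
      isOpen_lt hc continuous_const
    obtain ⟨ρ, hρ, hball⟩ := Metric.isOpen_iff.mp hO z hqz
    have hzD : z ∈ closure D := hDsub hz
    obtain ⟨b, hbD, hbz⟩ := Metric.mem_closure_iff.mp hzD (ρ / 3) (by linarith)
    rw [hd] at hbD
    obtain ⟨i, rfl⟩ := hbD
    obtain ⟨j, hs1, hs2⟩ := hdense (ρ / 3) (ρ / 2) (by linarith) (by linarith)
    have hQij : Q i j := by
      refine ⟨q, hq, fun y hy => ?_⟩
      apply hball
      rw [Metric.mem_ball] at hy ⊢
      have : dist y z ≤ dist y (d i) + dist (d i) z := dist_triangle _ _ _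
      have hdz : dist (d i) z < ρ / 3 := by rw [dist_comm]; exact hbz
      linarith
    refine ⟨Nat.pair i j, ?_⟩
    show (z.2 - (p' (Nat.unpair (Nat.pair i j)).1 (Nat.unpair (Nat.pair i j)).2).2)
        (z.1 - (p' (Nat.unpair (Nat.pair i j)).1 (Nat.unpair (Nat.pair i j)).2).1) < 0
    rw [Nat.unpair_pair]
    show (z.2 - (p' i j).2) (z.1 - (p' i j).1) < 0
    rw [hp']
    simp only [dif_pos hQij]
    exact hQij.choose_spec.2 z (by rw [Metric.mem_ball]; exact lt_trans hbz hs1)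

private lemma l2_mul_int {μ : Measure ℝ} {F G : ℝ → ℝ}
    (hF : MemLp F 2 μ) (hG : MemLp G 2 μ) : Integrable (fun t => F t * G t) μ := by
  refine Integrable.mono' (hF.integrable_sq.add hG.integrable_sq)
    (hF.aestronglyMeasurable.mul hG.aestronglyMeasurable) (ae_of_all _ fun t => ?_)
  have h := abs_mul (F t) (G t)
  have := sq_abs (F t)
  have := sq_abs (G t)
  have := sq_nonneg (|F t| - |G t|)
  simp only [Pi.add_apply]
  rw [Real.norm_eq_abs, h]
  nlinarith [abs_nonneg (F t), abs_nonneg (G t)]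

/-- If `α : V → 𝒫(V')` is maximal monotone and represented by `g ∈ 𝓕(V)`, then its
pointwise a.e. superposition `α̂` on `L²(0,T;V)` is maximal monotone: it is monotone,
and any pair `(u,w)` in monotone relation with the whole graph of `α̂` belongs to the
graph of `α̂`. -/
theorem stmt15 {V : Type*} [NormedAddCommGroup V] [NormedSpace ℝ V]
    (T : ℝ) (hT : 0 < T)
    (α : V → Set (StrongDual ℝ V))
    (hproper : ∃ v w, w ∈ α v)
    (hmono : ∀ v w (v' w' : StrongDual ℝ V), v' ∈ α v → w' ∈ α w → 0 ≤ (v' - w') (v - w))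
    (hmax : ∀ v (v' : StrongDual ℝ V),
      (∀ w (w' : StrongDual ℝ V), w' ∈ α w → 0 ≤ (v' - w') (v - w)) → v' ∈ α v)
    (g : V × StrongDual ℝ V → EReal)
    (hconv : ∀ x y : V × StrongDual ℝ V, ∀ a b : ℝ, 0 ≤ a → 0 ≤ b → a + b = 1 →
      g (a • x + b • y) ≤ (a : EReal) * g x + (b : EReal) * g y)
    (hlsc : LowerSemicontinuous g)
    (hge : ∀ p : V × StrongDual ℝ V, ((p.2 p.1 : ℝ) : EReal) ≤ g p)
    (hrep : ∀ p : V × StrongDual ℝ V, g p = ((p.2 p.1 : ℝ) : EReal) ↔ p.2 ∈ α p.1) :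
    (∀ (u₁ u₂ : Lp V 2 (volume.restrict (Set.Ioo (0:ℝ) T)))
        (w₁ w₂ : Lp (StrongDual ℝ V) 2 (volume.restrict (Set.Ioo (0:ℝ) T))),
      (∀ᵐ t ∂(volume.restrict (Set.Ioo (0:ℝ) T)), w₁ t ∈ α (u₁ t)) →
      (∀ᵐ t ∂(volume.restrict (Set.Ioo (0:ℝ) T)), w₂ t ∈ α (u₂ t)) →
      0 ≤ ∫ t, (w₁ t - w₂ t) (u₁ t - u₂ t) ∂(volume.restrict (Set.Ioo (0:ℝ) T))) ∧
    (∀ (u : Lp V 2 (volume.restrict (Set.Ioo (0:ℝ) T)))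
        (w : Lp (StrongDual ℝ V) 2 (volume.restrict (Set.Ioo (0:ℝ) T))),
      (∀ (u₂ : Lp V 2 (volume.restrict (Set.Ioo (0:ℝ) T)))
          (w₂ : Lp (StrongDual ℝ V) 2 (volume.restrict (Set.Ioo (0:ℝ) T))),
        (∀ᵐ t ∂(volume.restrict (Set.Ioo (0:ℝ) T)), w₂ t ∈ α (u₂ t)) →
        0 ≤ ∫ t, (w t - w₂ t) (u t - u₂ t) ∂(volume.restrict (Set.Ioo (0:ℝ) T))) →
      ∀ᵐ t ∂(volume.restrict (Set.Ioo (0:ℝ) T)), w t ∈ α (u t)) := by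
  classical
  set μ : Measure ℝ := volume.restrict (Set.Ioo (0:ℝ) T) with hμdef
  haveI : IsFiniteMeasure μ := by
    constructor
    rw [hμdef, Measure.restrict_apply_univ, Real.volume_Ioo]
    exact ENNReal.ofReal_lt_top
  constructor
  · intro u₁ u₂ w₁ w₂ h1 h2
    apply integral_nonneg_of_ae
    filter_upwards [h1, h2] with t ht1 ht2
    exact hmono _ _ _ _ ht1 ht2
  intro u w hyp
  borelize V
  borelize (StrongDual ℝ V)
  obtain ⟨v₀, v₀', hv₀⟩ := hproper
  have hu := (Lp.memLp u).aestronglyMeasurable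
  have hw := (Lp.memLp w).aestronglyMeasurable
  set uF : ℝ → V := hu.mk _ with huFdef
  set wF : ℝ → StrongDual ℝ V := hw.mk _ with hwFdef
  have hu_sm : StronglyMeasurable uF := hu.stronglyMeasurable_mk
  have hw_sm : StronglyMeasurable wF := hw.stronglyMeasurable_mk
  have hu_ae : (u : ℝ → V) =ᵐ[μ] uF := hu.ae_eq_mk
  have hw_ae : (w : ℝ → StrongDual ℝ V) =ᵐ[μ] wF := hw.ae_eq_mk
  have huL2 : MemLp uF 2 μ := (Lp.memLp u).ae_eq hu_ae
  have hwL2 : MemLp wF 2 μ := (Lp.memLp w).ae_eq hw_ae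
  -- separable set containing all values
  have hKsep : TopologicalSpace.IsSeparable
      ((closure (Set.range uF)) ×ˢ (closure (Set.range wF))) :=
    (hu_sm.isSeparable_range.closure).prod (hw_sm.isSeparable_range.closure)
  have hzK : ∀ t, (uF t, wF t) ∈ (closure (Set.range uF)) ×ˢ (closure (Set.range wF)) :=
    fun t => ⟨subset_closure (Set.mem_range_self t), subset_closure (Set.mem_range_self t)⟩
  obtain ⟨p, hpgraph, hpcov⟩ := superposition_cover α (v₀, v₀') hv₀ hKsep
  -- measurable real functions
  have hpair_sm : ∀ (c : V) (c' : StrongDual ℝ V),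
      StronglyMeasurable (fun t => (wF t - c') (uF t - c)) := by
    intro c c'
    exact isBoundedBilinearMap_apply.continuous.comp_stronglyMeasurable
      ((hw_sm.sub stronglyMeasurable_const).prodMk (hu_sm.sub stronglyMeasurable_const))
  have hpair_int : ∀ (c : V) (c' : StrongDual ℝ V),
      Integrable (fun t => (wF t - c') (uF t - c)) μ := by
    intro c c'
    refine Integrable.mono' (l2_mul_int ((hwL2.sub (memLp_const c')).norm)
      ((huL2.sub (memLp_const c)).norm)) (hpair_sm c c').aestronglyMeasurable
      (ae_of_all _ fun t => ?_)
    exact (ContinuousLinearMap.le_opNorm _ _)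
  set f : ℕ → ℝ → ℝ := fun n t => (wF t - (p n).2) (uF t - (p n).1) with hfdef
  set B' : ℕ → Set ℝ := fun n => {t | f n t < 0} with hB'def
  have hB'meas : ∀ n, MeasurableSet (B' n) := fun n =>
    measurableSet_lt (hpair_sm _ _).measurable measurable_const
  set B : Set ℝ := ⋃ n, B' n with hBdef
  have hBmeas : MeasurableSet B := MeasurableSet.iUnion hB'meas
  have hgood : ∀ t, t ∉ B → wF t ∈ α (uF t) := by
    intro t ht
    apply hmax
    intro v v' hv
    by_contra hneg
    push_neg at hneg
    obtain ⟨n, hn⟩ := hpcov (uF t, wF t) (hzK t) ⟨(v, v'), hv, hneg⟩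
    exact ht (Set.mem_iUnion.2 ⟨n, hn⟩)
  suffices hB0 : μ B = 0 by
    have hae : ∀ᵐ t ∂μ, t ∉ B := measure_eq_zero_iff_ae_notMem.mp hB0
    filter_upwards [hae, hu_ae, hw_ae] with t htB hut hwt
    rw [hut, hwt]
    exact hgood t htB
  by_contra hB0
  -- first-index decomposition of B
  set Bd : ℕ → Set ℝ := fun n => B' n \ ⋃ j, ⋃ (_ : j < n), B' j with hBddef
  have hBdsub : ∀ n, Bd n ⊆ B' n := fun n => Set.diff_subset
  have hBdmeas : ∀ n, MeasurableSet (Bd n) := fun n => (hB'meas n).diff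
    (MeasurableSet.iUnion fun j => MeasurableSet.iUnion fun _ => hB'meas j)
  have hBdU : (⋃ n, Bd n) = B := by
    apply Set.Subset.antisymm (Set.iUnion_mono fun n => hBdsub n)
    intro t ht
    have hex : ∃ n, t ∈ B' n := Set.mem_iUnion.mp ht
    refine Set.mem_iUnion.mpr ⟨Nat.find hex, Nat.find_spec hex, ?_⟩
    simp only [Set.mem_iUnion, not_exists]
    exact fun j hj htj => Nat.find_min hex hj htj
  have hBdm : ∃ m, μ (Bd m) ≠ 0 := by
    by_contra h
    push_neg at h
    exact hB0 (by rw [← hBdU]; exact measure_iUnion_null h)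
  obtain ⟨m, hm⟩ := hBdm
  have hlev : ∃ k : ℕ, μ (Bd m ∩ {t | f m t ≤ -(1/(k+1))}) ≠ 0 := by
    by_contra h
    push_neg at h
    apply hm
    have hcover : Bd m = ⋃ k : ℕ, (Bd m ∩ {t | f m t ≤ -(1/((k:ℝ)+1))}) := by
      ext t
      simp only [Set.mem_iUnion, Set.mem_inter_iff, Set.mem_setOf_eq]
      constructor
      · intro ht
        have hft : f m t < 0 := hBdsub m ht
        obtain ⟨k, hk⟩ := exists_nat_one_div_lt (show (0:ℝ) < -(f m t) by linarith)
        exact ⟨k, ht, by push_cast at hk ⊢; linarith⟩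
      · rintro ⟨k, hk, _⟩
        exact hk
    rw [hcover]
    exact measure_iUnion_null (by exact_mod_cast h)
  obtain ⟨k, hA0⟩ := hlev
  set ε : ℝ := 1/(k+1) with hεdef
  have hε : 0 < ε := by positivity
  set A : Set ℝ := Bd m ∩ {t | f m t ≤ -ε} with hAdef
  have hA0' : μ A ≠ 0 := hA0
  have hAmeas : MeasurableSet A := (hBdmeas m).inter
    (measurableSet_le (hpair_sm (p m).1 (p m).2).measurable measurable_const)
  have hApos : 0 < (μ A).toReal := ENNReal.toReal_pos hA0' (measure_ne_top μ A)
  -- truncation sets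
  set E : ℕ → Set ℝ := fun N => ⋃ n, ⋃ (_ : n ≤ N), B' n with hEdef
  have hEmeas : ∀ N, MeasurableSet (E N) := fun N =>
    MeasurableSet.iUnion fun n => MeasurableSet.iUnion fun _ => hB'meas n
  have hEmono : Monotone E := fun a b hab =>
    Set.iUnion₂_mono' fun n hn => ⟨n, hn.trans hab, subset_rfl⟩
  have hEsubB : ∀ N, E N ⊆ B := by
    intro N t ht
    obtain ⟨n, _, hn⟩ := Set.mem_iUnion₂.mp ht
    exact Set.mem_iUnion.mpr ⟨n, hn⟩
  have hEU : (⋃ N, E N) = B := by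
    apply Set.Subset.antisymm (Set.iUnion_subset hEsubB)
    intro t ht
    obtain ⟨n, hn⟩ := Set.mem_iUnion.mp ht
    exact Set.mem_iUnion.mpr ⟨n, Set.mem_iUnion₂.mpr ⟨n, le_refl n, hn⟩⟩
  set h₀ : ℝ → ℝ := fun t => (wF t - v₀') (uF t - v₀) with hh₀def
  have hh₀int : Integrable h₀ μ := hpair_int v₀ v₀'
  have htend : Filter.Tendsto (fun N => ∫ t in E N, |h₀ t| ∂μ) Filter.atTop
      (nhds (∫ t in B, |h₀ t| ∂μ)) := by
    have h1 : IntegrableOn (fun t => |h₀ t|) (⋃ N, E N) μ := by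
      rw [hEU]; exact hh₀int.abs.integrableOn
    have := tendsto_setIntegral_of_monotone hEmeas hEmono h1
    rwa [hEU] at this
  have hev : ∀ᶠ N in Filter.atTop,
      (∫ t in B, |h₀ t| ∂μ) - ε * (μ A).toReal < ∫ t in E N, |h₀ t| ∂μ := by
    apply htend.eventually
    apply eventually_gt_nhds
    nlinarith
  obtain ⟨N₀, hN₀⟩ := Filter.eventually_atTop.mp hev
  set N : ℕ := max N₀ m with hNdef
  have hmN : m ≤ N := le_max_right _ _
  have hNtail : (∫ t in B, |h₀ t| ∂μ) - ε * (μ A).toReal < ∫ t in E N, |h₀ t| ∂μ :=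
    hN₀ N (le_max_left _ _)
  have hsplit : ∫ t in B, |h₀ t| ∂μ
      = (∫ t in E N, |h₀ t| ∂μ) + ∫ t in B \ E N, |h₀ t| ∂μ := by
    rw [← Set.union_diff_cancel (hEsubB N)]
    rw [setIntegral_union Set.disjoint_sdiff_right
      ((hBmeas.diff (hEmeas N))) hh₀int.abs.integrableOn hh₀int.abs.integrableOn]
    rw [Set.union_diff_cancel (hEsubB N)]
  have htail : ∫ t in B \ E N, |h₀ t| ∂μ < ε * (μ A).toReal := by linarith
  -- the index function
  set idx : ℝ → ℕ := fun t => if h : ∃ n, t ∈ B' n then Nat.find h else 0 with hidxdef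
  have hBd_iff : ∀ (t : ℝ) (hex : ∃ j, t ∈ B' j) (n : ℕ), Nat.find hex = n ↔ t ∈ Bd n := by
    intro t hex n
    constructor
    · rintro rfl
      refine ⟨Nat.find_spec hex, ?_⟩
      simp only [Set.mem_iUnion, not_exists]
      exact fun j hj htj => Nat.find_min hex hj htj
    · intro ht
      refine le_antisymm (Nat.find_min' hex ht.1) ?_
      by_contra hlt
      push_neg at hlt
      exact ht.2 (Set.mem_iUnion₂.mpr ⟨Nat.find hex, hlt, Nat.find_spec hex⟩)
  have hidx_mem : ∀ t, t ∈ B → t ∈ B' (idx t) := by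
    intro t ht
    have hex : ∃ n, t ∈ B' n := Set.mem_iUnion.mp ht
    simp only [hidxdef, dif_pos hex]
    exact Nat.find_spec hex
  have hidx_le : ∀ t, t ∈ E N → idx t ≤ N := by
    intro t ht
    obtain ⟨n, hn, htn⟩ := Set.mem_iUnion₂.mp ht
    have hex : ∃ j, t ∈ B' j := ⟨n, htn⟩
    simp only [hidxdef, dif_pos hex]
    exact (Nat.find_min' hex htn).trans hn
  have hidx_A : ∀ t, t ∈ Bd m → idx t = m := by
    intro t ht
    have hex : ∃ j, t ∈ B' j := ⟨m, hBdsub m ht⟩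
    simp only [hidxdef, dif_pos hex]
    exact (hBd_iff t hex m).mpr ht
  have hidx_pre : ∀ n, idx ⁻¹' {n} = Bd n ∪ (if n = 0 then Bᶜ else ∅) := by
    intro n
    ext t
    simp only [Set.mem_preimage, Set.mem_singleton_iff, hidxdef]
    by_cases hex : ∃ j, t ∈ B' j
    · have htB : t ∈ B := Set.mem_iUnion.mpr hex
      simp only [dif_pos hex]
      rw [hBd_iff t hex n]
      constructor
      · exact fun h => Or.inl h
      · rintro (h | h)
        · exact h
        · exfalso
          rcases n with _ | n
          · simp only [if_pos rfl] at h
            exact h htB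
          · simp at h
    · have htB : t ∉ B := fun hB => hex (Set.mem_iUnion.mp hB)
      simp only [dif_neg hex]
      constructor
      · rintro rfl
        right
        simp only [if_pos rfl]
        exact htB
      · rintro (h | h)
        · exact absurd ⟨n, hBdsub n h⟩ hex
        · rcases n with _ | n
          · rfl
          · simp at h
  have hidx_meas : Measurable idx := by
    apply measurable_to_countable'
    intro n
    rw [hidx_pre n]
    refine (hBdmeas n).union ?_
    split
    · exact hBmeas.compl
    · exact MeasurableSet.empty
  -- the comparison pair
  set u2f : ℝ → V :=
    (E N).piecewise (fun t => (p (idx t)).1) (B.piecewise (fun _ => v₀) uF) with hu2fdef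
  set w2f : ℝ → StrongDual ℝ V :=
    (E N).piecewise (fun t => (p (idx t)).2) (B.piecewise (fun _ => v₀') wF) with hw2fdef
  have hval_E : ∀ t ∈ E N, u2f t = (p (idx t)).1 ∧ w2f t = (p (idx t)).2 := fun t ht =>
    ⟨Set.piecewise_eq_of_mem _ _ _ ht, Set.piecewise_eq_of_mem _ _ _ ht⟩
  have hval_B : ∀ t, t ∉ E N → t ∈ B → u2f t = v₀ ∧ w2f t = v₀' := by
    intro t ht htB
    constructor
    · rw [hu2fdef]
      rw [Set.piecewise_eq_of_notMem _ _ _ ht, Set.piecewise_eq_of_mem _ _ _ htB]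
    · rw [hw2fdef]
      rw [Set.piecewise_eq_of_notMem _ _ _ ht, Set.piecewise_eq_of_mem _ _ _ htB]
  have hval_out : ∀ t, t ∉ E N → t ∉ B → u2f t = uF t ∧ w2f t = wF t := by
    intro t ht htB
    constructor
    · rw [hu2fdef]
      rw [Set.piecewise_eq_of_notMem _ _ _ ht, Set.piecewise_eq_of_notMem _ _ _ htB]
    · rw [hw2fdef]
      rw [Set.piecewise_eq_of_notMem _ _ _ ht, Set.piecewise_eq_of_notMem _ _ _ htB]
  have hcnt1 : StronglyMeasurable (fun t => (p (idx t)).1) := by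
    rw [stronglyMeasurable_iff_measurable_separable]
    exact ⟨(measurable_from_nat (f := fun n => (p n).1)).comp hidx_meas,
      ((Set.countable_range (fun n => (p n).1)).isSeparable).mono
        (Set.range_comp_subset_range idx (fun n => (p n).1))⟩
  have hcnt2 : StronglyMeasurable (fun t => (p (idx t)).2) := by
    rw [stronglyMeasurable_iff_measurable_separable]
    exact ⟨(measurable_from_nat (f := fun n => (p n).2)).comp hidx_meas,
      ((Set.countable_range (fun n => (p n).2)).isSeparable).mono
        (Set.range_comp_subset_range idx (fun n => (p n).2))⟩
  have hu2f_sm : StronglyMeasurable u2f := StronglyMeasurable.piecewise (hEmeas N) hcnt1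
    (StronglyMeasurable.piecewise hBmeas stronglyMeasurable_const hu_sm)
  have hw2f_sm : StronglyMeasurable w2f := StronglyMeasurable.piecewise (hEmeas N) hcnt2
    (StronglyMeasurable.piecewise hBmeas stronglyMeasurable_const hw_sm)
  -- uniform bound on the modified part
  set C : ℝ := ((Finset.range (N+1)).sup' (Finset.nonempty_range_iff.mpr (Nat.succ_ne_zero N))
    (fun n => max ‖(p n).1‖ ‖(p n).2‖)) ⊔ (max ‖v₀‖ ‖v₀'‖) with hCdef
  have hC0 : 0 ≤ C := le_trans (le_trans (norm_nonneg v₀) (le_max_left _ _)) le_sup_right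
  have hbd : ∀ t, ‖u2f t‖ ≤ C + ‖uF t‖ ∧ ‖w2f t‖ ≤ C + ‖wF t‖ := by
    intro t
    by_cases ht : t ∈ E N
    · obtain ⟨h1, h2⟩ := hval_E t ht
      have hle : max ‖(p (idx t)).1‖ ‖(p (idx t)).2‖ ≤ C := le_trans
        (Finset.le_sup' (fun n => max ‖(p n).1‖ ‖(p n).2‖) (Finset.mem_range.mpr (Nat.lt_succ_of_le (hidx_le t ht)))) le_sup_left
      have hle1 : ‖(p (idx t)).1‖ ≤ C := le_trans (le_max_left _ _) hle
      have hle2 : ‖(p (idx t)).2‖ ≤ C := le_trans (le_max_right _ _) hle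
      rw [h1, h2]
      exact ⟨by linarith [norm_nonneg (uF t)], by linarith [norm_nonneg (wF t)]⟩
    by_cases htB : t ∈ B
    · obtain ⟨h1, h2⟩ := hval_B t ht htB
      have hle1 : ‖v₀‖ ≤ C := le_trans (le_trans (le_max_left _ _) le_sup_right) le_rfl
      have hle2 : ‖v₀'‖ ≤ C := le_trans (le_trans (le_max_right _ _) le_sup_right) le_rfl
      rw [h1, h2]
      exact ⟨by linarith [norm_nonneg (uF t)], by linarith [norm_nonneg (wF t)]⟩
    · obtain ⟨h1, h2⟩ := hval_out t ht htB
      rw [h1, h2]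
      exact ⟨by linarith, by linarith⟩
  have hu2f_2 : MemLp u2f 2 μ := by
    refine MemLp.of_le ((memLp_const C).add huL2.norm) hu2f_sm.aestronglyMeasurable
      (ae_of_all _ fun t => ?_)
    have h1 := (hbd t).1
    have h2 : ((fun _ : ℝ => C) + fun t => ‖uF t‖) t = C + ‖uF t‖ := rfl
    rw [h2, Real.norm_eq_abs]
    exact h1.trans (le_abs_self _)
  have hw2f_2 : MemLp w2f 2 μ := by
    refine MemLp.of_le ((memLp_const C).add hwL2.norm) hw2f_sm.aestronglyMeasurable
      (ae_of_all _ fun t => ?_)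
    have h1 := (hbd t).2
    have h2 : ((fun _ : ℝ => C) + fun t => ‖wF t‖) t = C + ‖wF t‖ := rfl
    rw [h2, Real.norm_eq_abs]
    exact h1.trans (le_abs_self _)
  -- apply the hypothesis
  have hadm : ∀ᵐ t ∂μ, (hw2f_2.toLp w2f) t ∈ α ((hu2f_2.toLp u2f) t) := by
    filter_upwards [hu2f_2.coeFn_toLp, hw2f_2.coeFn_toLp] with t h1 h2
    rw [h1, h2]
    by_cases ht : t ∈ E N
    · obtain ⟨e1, e2⟩ := hval_E t ht
      rw [e1, e2]
      exact hpgraph _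
    by_cases htB : t ∈ B
    · obtain ⟨e1, e2⟩ := hval_B t ht htB
      rw [e1, e2]
      exact hv₀
    · obtain ⟨e1, e2⟩ := hval_out t ht htB
      rw [e1, e2]
      exact hgood t htB
  have hint := hyp (hu2f_2.toLp u2f) (hw2f_2.toLp w2f) hadm
  set G : ℝ → ℝ := fun t => (wF t - w2f t) (uF t - u2f t) with hGdef
  have hGeq : (fun t => ((w : ℝ → StrongDual ℝ V) t - (hw2f_2.toLp w2f : ℝ → StrongDual ℝ V) t)
      ((u : ℝ → V) t - (hu2f_2.toLp u2f : ℝ → V) t)) =ᵐ[μ] G := by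
    filter_upwards [hu_ae, hw_ae, hu2f_2.coeFn_toLp, hw2f_2.coeFn_toLp] with t h1 h2 h3 h4
    simp only [hGdef]
    rw [h1, h2, h3, h4]
  have hint' : 0 ≤ ∫ t, G t ∂μ := hint.trans_eq (integral_congr_ae hGeq)
  have hG_sm : StronglyMeasurable G :=
    isBoundedBilinearMap_apply.continuous.comp_stronglyMeasurable
      ((hw_sm.sub hw2f_sm).prodMk (hu_sm.sub hu2f_sm))
  have hG_int : Integrable G μ := by
    refine Integrable.mono' (l2_mul_int ((hwL2.sub hw2f_2).norm) ((huL2.sub hu2f_2).norm))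
      hG_sm.aestronglyMeasurable (ae_of_all _ fun t => ?_)
    exact ContinuousLinearMap.le_opNorm _ _
  set R : ℝ → ℝ := fun t => A.indicator (fun _ => -ε) t
      + (B \ E N).indicator (fun s => |h₀ s|) t with hRdef
  have hR_int : Integrable R μ :=
    ((integrable_const (-ε)).indicator hAmeas).add
      (hh₀int.abs.indicator (hBmeas.diff (hEmeas N)))
  have hAsubE : A ⊆ E N := fun t ht =>
    Set.mem_iUnion₂.mpr ⟨m, hmN, hBdsub m ht.1⟩
  have hAsubB : A ⊆ B := fun t ht => Set.mem_iUnion.mpr ⟨m, hBdsub m ht.1⟩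
  have hGR : ∀ t, G t ≤ R t := by
    intro t
    by_cases ht : t ∈ E N
    · obtain ⟨e1, e2⟩ := hval_E t ht
      have htB : t ∈ B := hEsubB N ht
      have hBidx : t ∈ B' (idx t) := hidx_mem t htB
      have hGt : G t = f (idx t) t := by
        simp only [hGdef, hfdef]
        rw [e1, e2]
      have hneg : G t < 0 := by rw [hGt]; exact hBidx
      have hnotD : t ∉ B \ E N := fun h => h.2 ht
      by_cases htA : t ∈ A
      · have hGε : G t ≤ -ε := by
          rw [hGt, hidx_A t htA.1]
          exact htA.2
        simp only [hRdef]
        rw [Set.indicator_of_mem htA, Set.indicator_of_notMem hnotD]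
        linarith
      · simp only [hRdef]
        rw [Set.indicator_of_notMem htA, Set.indicator_of_notMem hnotD]
        linarith
    by_cases htB : t ∈ B
    · obtain ⟨e1, e2⟩ := hval_B t ht htB
      have hGt : G t = h₀ t := by
        simp only [hGdef, hh₀def]
        rw [e1, e2]
      have htA : t ∉ A := fun h => ht (hAsubE h)
      have hmemD : t ∈ B \ E N := ⟨htB, ht⟩
      simp only [hRdef]
      rw [Set.indicator_of_notMem htA, Set.indicator_of_mem hmemD, hGt]
      linarith [le_abs_self (h₀ t)]
    · obtain ⟨e1, e2⟩ := hval_out t ht htB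
      have hGt : G t = 0 := by
        simp only [hGdef]
        rw [e1, e2]
        simp
      have htA : t ∉ A := fun h => htB (hAsubB h)
      have hnotD : t ∉ B \ E N := fun h => htB h.1
      simp only [hRdef]
      rw [Set.indicator_of_notMem htA, Set.indicator_of_notMem hnotD, hGt]
      simp
  have hIR : ∫ t, R t ∂μ = -(ε * (μ A).toReal) + ∫ t in B \ E N, |h₀ t| ∂μ := by
    simp only [hRdef]
    rw [integral_add ((integrable_const (-ε)).indicator hAmeas)
      (hh₀int.abs.indicator (hBmeas.diff (hEmeas N)))]
    rw [integral_indicator hAmeas, integral_indicator (hBmeas.diff (hEmeas N))]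
    rw [setIntegral_const]
    rw [smul_eq_mul]
    ring_nf
    simp only [measureReal_def]; ring
  have hfinal : ∫ t, G t ∂μ ≤ ∫ t, R t ∂μ := integral_mono hG_int hR_int hGR
  rw [hIR] at hfinal
  linarith
end

section
/- Let ψₙ ∈ 𝓕(V) represent operators αₙ, and suppose ψₙ sequentially Γ-converges with respect to the nonlinear weak topology π̃ to ψ, and ψ represents an operator α. If (vₙ, vₙ*) ∈ graph(αₙ) for every n and (vₙ,vₙ*) π̃-converges to (v,v*), then v* ∈ α(v). That is, the Kuratowski upper limit of the graphs of αₙ is contained in the graph of α. -/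
open NormedSpace Filter Topology

/-- `π̃`-convergence of a sequence in `V × V'`: weak convergence of both components
together with convergence of the duality pairing. -/
def PiTildeTendsto {V : Type*} [NormedAddCommGroup V] [NormedSpace ℝ V]
    (p : ℕ → V × StrongDual ℝ V) (q : V × StrongDual ℝ V) : Prop :=
  (∀ f : StrongDual ℝ V, Tendsto (fun n => f (p n).1) atTop (nhds (f q.1))) ∧
  (∀ v : V, Tendsto (fun n => (p n).2 v) atTop (nhds (q.2 v))) ∧
  Tendsto (fun n => (p n).2 (p n).1) atTop (nhds (q.2 q.1))

/-- Kuratowski upper-limit of graphs: if `ψₙ` represents `αₙ`, `ψₙ` Γ-converges to `ψ`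
with respect to `π̃`, `ψ` represents `α`, `(vₙ,vₙ*) ∈ graph(αₙ)` and
`(vₙ,vₙ*) π̃-converges to (v,v*)`, then `v* ∈ α(v)`. -/
theorem stmt18 {V : Type*} [NormedAddCommGroup V] [NormedSpace ℝ V]
    [TopologicalSpace.SeparableSpace V]
    (αn : ℕ → V → Set (StrongDual ℝ V)) (α : V → Set (StrongDual ℝ V))
    (ψn : ℕ → V × StrongDual ℝ V → EReal) (ψ : V × StrongDual ℝ V → EReal)
    (hFn : ∀ n, (∀ x y : V × StrongDual ℝ V, ∀ a b : ℝ, 0 ≤ a → 0 ≤ b → a + b = 1 →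
        ψn n (a • x + b • y) ≤ (a : EReal) * ψn n x + (b : EReal) * ψn n y) ∧
      LowerSemicontinuous (ψn n) ∧
      (∀ p : V × StrongDual ℝ V, ((p.2 p.1 : ℝ) : EReal) ≤ ψn n p))
    (hrepn : ∀ n, ∀ p : V × StrongDual ℝ V,
      ψn n p = ((p.2 p.1 : ℝ) : EReal) ↔ p.2 ∈ αn n p.1)
    (hgeψ : ∀ p : V × StrongDual ℝ V, ((p.2 p.1 : ℝ) : EReal) ≤ ψ p)
    (hrepψ : ∀ p : V × StrongDual ℝ V, ψ p = ((p.2 p.1 : ℝ) : EReal) ↔ p.2 ∈ α p.1)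
    (hliminf : ∀ (q : V × StrongDual ℝ V) (p : ℕ → V × StrongDual ℝ V), PiTildeTendsto p q →
      ψ q ≤ Filter.liminf (fun n => ψn n (p n)) atTop)
    (hrecovery : ∀ q : V × StrongDual ℝ V, ∃ p : ℕ → V × StrongDual ℝ V, PiTildeTendsto p q ∧
      Tendsto (fun n => ψn n (p n)) atTop (nhds (ψ q)))
    (vn : ℕ → V) (vn' : ℕ → StrongDual ℝ V) (v : V) (v' : StrongDual ℝ V)
    (hgraph : ∀ n, vn' n ∈ αn n (vn n))
    (hconv : PiTildeTendsto (fun n => (vn n, vn' n)) (v, v')) :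
    v' ∈ α v := by
  have heq : ∀ n, ψn n (vn n, vn' n) = ((vn' n (vn n) : ℝ) : EReal) := fun n =>
    (hrepn n (vn n, vn' n)).2 (hgraph n)
  have hpair : Tendsto (fun n => ((vn' n (vn n) : ℝ) : EReal)) atTop
      (nhds ((v' v : ℝ) : EReal)) :=
    (continuous_coe_real_ereal.tendsto _).comp hconv.2.2
  have hle : ψ (v, v') ≤ ((v' v : ℝ) : EReal) := by
    calc ψ (v, v') ≤ Filter.liminf (fun n => ψn n (vn n, vn' n)) atTop :=
          hliminf (v, v') (fun n => (vn n, vn' n)) hconv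
      _ = ((v' v : ℝ) : EReal) := by
          simp only [heq]; exact hpair.liminf_eq
  exact (hrepψ (v, v')).1 (le_antisymm hle (hgeψ (v, v')))
end
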